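/- For every homogeneous ω ∈ Ω^r one has Δ(Δ(ω)) = −(ζω − ωζ), i.e. Δ² equals minus the commutator with the 2-form ζ := dϑ − ϑ². -/
import Mathlib


/-- For homogeneous ω ∈ Ω^r, Δ(Δ(ω)) = −(ζω − ωζ) with ζ := dϑ − ϑ². -/
theorem stmt_3 {k Ω : Type*} [Field k] [CharZero k] [Ring Ω] [Algebra k Ω]
    (𝒜 : ℕ → Submodule k Ω) [GradedAlgebra 𝒜]
    (d : Ω →ₗ[k] Ω)
    (hd_map : ∀ (r : ℕ), ∀ ω ∈ 𝒜 r, d ω ∈ 𝒜 (r + 1))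
    (hd2 : ∀ ω : Ω, d (d ω) = 0)
    (hLeibniz : ∀ (r : ℕ), ∀ ω ∈ 𝒜 r, ∀ ω' : Ω,
      d (ω * ω') = d ω * ω' + ((-1 : k) ^ r) • (ω * d ω'))
    (ϑ : Ω) (hϑ : ϑ ∈ 𝒜 1)
    (hinner : ∀ f ∈ 𝒜 0, d f = ϑ * f - f * ϑ)
    (Δ : Ω →ₗ[k] Ω)
    (hΔ : ∀ (r : ℕ), ∀ ω ∈ 𝒜 r, Δ ω = ϑ * ω - ((-1 : k) ^ r) • (ω * ϑ) - d ω)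
    (r : ℕ) (ω : Ω) (hω : ω ∈ 𝒜 r) :
    Δ (Δ ω) = -((d ϑ - ϑ ^ 2) * ω - ω * (d ϑ - ϑ ^ 2)) := by
  set ε : k := (-1 : k) ^ r with hεdef
  have hε : ε * ε = 1 := by rw [hεdef, ← mul_pow]; norm_num
  have hϑω : ϑ * ω ∈ 𝒜 (r + 1) := by
    have := SetLike.mul_mem_graded hϑ hω
    rwa [Nat.add_comm] at this
  have hωϑ : ω * ϑ ∈ 𝒜 (r + 1) := SetLike.mul_mem_graded hω hϑ
  have hdω : d ω ∈ 𝒜 (r + 1) := hd_map r ω hω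
  have hΔω : Δ ω = ϑ * ω - ε • (ω * ϑ) - d ω := hΔ r ω hω
  have hΔωmem : Δ ω ∈ 𝒜 (r + 1) := by
    rw [hΔω]
    exact sub_mem (sub_mem hϑω (Submodule.smul_mem _ _ hωϑ)) hdω
  have hΔΔ : Δ (Δ ω) = ϑ * Δ ω - ((-1 : k) ^ (r + 1)) • (Δ ω * ϑ) - d (Δ ω) :=
    hΔ (r + 1) (Δ ω) hΔωmem
  have hεr1 : ((-1 : k) ^ (r + 1)) = -ε := by rw [pow_succ, hεdef]; ring
  have hdϑω : d (ϑ * ω) = d ϑ * ω + (-1 : k) • (ϑ * d ω) := by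
    have := hLeibniz 1 ϑ hϑ ω
    simpa using this
  have hdωϑ : d (ω * ϑ) = d ω * ϑ + ε • (ω * d ϑ) := hLeibniz r ω hω ϑ
  have hdΔω : d (Δ ω) = d (ϑ * ω) - ε • (d (ω * ϑ)) := by
    rw [hΔω, map_sub, map_sub, map_smul, hd2, sub_zero]
  rw [hΔΔ, hεr1, hdΔω, hΔω, hdϑω, hdωϑ]
  simp only [smul_sub, smul_add, smul_smul, hε, one_smul, neg_smul, one_mul,
    mul_sub, sub_mul, neg_one_smul, mul_smul_comm, smul_mul_assoc, pow_two]
  abel_nf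
  simp [hε, mul_assoc]
  abel
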